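/- Fix integers ν ≥ 2 and x₀ ≥ 0 and a sequence (xₙ) with x_{n+1}² = ν + xₙ for all n ≥ 0, where each xₙ generates a degree-2 extension Kₙ₊₁ = ℚ(x_{n+1}) of Kₙ = ℚ(xₙ). Define u₀ = ν² - ν and u_{n+1} = uₙ² - ν. Then for all n ≥ ℓ ≥ 0 and all j ≥ 0, the norm from Kₙ to K_ℓ of u_j - xₙ equals u_{j+n-ℓ} - x_ℓ. -/

import Mathlib

set_option synthInstance.maxHeartbeats 1000000
set_option maxHeartbeats 1000000

open IntermediateField

theorem quad_norm {K L : Type*} [Field K] [Field L] [Algebra K L]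
    (h2 : Module.finrank K L = 2) (t : L) (ht : t ∉ Set.range (algebraMap K L))
    (c : K) (htc : t ^ 2 = algebraMap K L c) (a : K) :
    Algebra.norm K (algebraMap K L a - t) = a ^ 2 - c := by
  have ht0 : t ≠ 0 := fun h0 => ht ⟨0, by simp [h0]⟩
  have li : LinearIndependent K ![(1 : L), t] := by
    rw [linearIndependent_fin2]
    refine ⟨ht0, fun b hb => ?_⟩
    simp only [Matrix.cons_val_one, Matrix.head_cons, Matrix.cons_val_zero] at hb
    have hb0 : b ≠ 0 := by rintro rfl; rw [zero_smul] at hb; exact one_ne_zero hb.symm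
    refine ht ⟨b⁻¹, ?_⟩
    rw [Algebra.smul_def] at hb
    rw [map_inv₀]
    exact (eq_inv_of_mul_eq_one_right hb).symm
  have hcard : Fintype.card (Fin 2) = Module.finrank K L := by simp [h2]
  let b := basisOfLinearIndependentOfCardEqFinrank li hcard
  have hb : ⇑b = ![(1 : L), t] := coe_basisOfLinearIndependentOfCardEqFinrank li hcard
  have hb0 : b 0 = 1 := by rw [hb]; rfl
  have hb1 : b 1 = t := by rw [hb]; rfl
  rw [Algebra.norm_eq_matrix_det b]
  have e0 : (algebraMap K L a - t) * b 0 = a • b 0 + (-1 : K) • b 1 := by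
    rw [hb0, hb1, Algebra.smul_def, Algebra.smul_def]; simp; ring
  have e1 : (algebraMap K L a - t) * b 1 = (-c) • b 0 + a • b 1 := by
    rw [hb0, hb1, Algebra.smul_def, Algebra.smul_def]
    have : t * t = algebraMap K L c := by rw [← htc]; ring
    simp only [map_neg, mul_one]
    rw [sub_mul, ← this]; ring
  have hm : Algebra.leftMulMatrix b (algebraMap K L a - t) = !![a, -c; -1, a] := by
    ext i j
    rw [Algebra.leftMulMatrix_eq_repr_mul]
    fin_cases j
    · fin_cases i <;> simp [e0, b.repr_self, Finsupp.single_apply]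
    · fin_cases i <;> simp [e1, b.repr_self, Finsupp.single_apply]
  rw [hm, Matrix.det_fin_two_of]
  ring

theorem stmt_7 (ν x₀ : ℤ) (hν : 2 ≤ ν) (hx₀ : 0 ≤ x₀)
    (x : ℕ → ℝ) (hx0 : x 0 = x₀) (hx : ∀ n, (x (n + 1)) ^ 2 = ν + x n)
    (K : ℕ → IntermediateField ℚ ℝ) (hK : ∀ n, K n = IntermediateField.adjoin ℚ {x n})
    (hle : ∀ n, K n ≤ K (n + 1))
    (hdeg : ∀ n, Module.finrank (K n) (extendScalars (hle n)) = 2)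
    (u : ℕ → ℤ) (hu0 : u 0 = ν ^ 2 - ν) (hu : ∀ n, u (n + 1) = (u n) ^ 2 - ν)
    (j ℓ n : ℕ) (hln : ℓ ≤ n) (h : K ℓ ≤ K n) :
    ((Algebra.norm (K ℓ)
        (⟨(u j : ℝ) - x n, by
          rw [mem_extendScalars, hK n]
          exact sub_mem (IntermediateField.intCast_mem _ _)
            (IntermediateField.mem_adjoin_simple_self ℚ (x n))⟩ :
          extendScalars h) : K ℓ) : ℝ)
      = (u (j + n - ℓ) : ℝ) - x ℓ := by
  have hxmem : ∀ k, x k ∈ K k := fun k => by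
    rw [hK k]; exact IntermediateField.mem_adjoin_simple_self ℚ (x k)
  have mono : ∀ a m, K a ≤ K (a + m) := fun a m => by
    induction m with
    | zero => exact le_refl _
    | succ m ih => exact ih.trans (hle (a + m))
  obtain ⟨m, rfl⟩ : ∃ m, n = ℓ + m := ⟨n - ℓ, (Nat.add_sub_cancel' hln).symm⟩
  clear hln
  have key : ∀ m (h : K ℓ ≤ K (ℓ + m)),
      FiniteDimensional (K ℓ) (extendScalars h) ∧
      ∀ j, ((Algebra.norm (K ℓ)
        (⟨(u j : ℝ) - x (ℓ + m),
          by rw [mem_extendScalars]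
             exact sub_mem (IntermediateField.intCast_mem _ _) (hxmem _)⟩ :
          extendScalars h) : K ℓ) : ℝ)
      = (u (j + (ℓ + m) - ℓ) : ℝ) - x ℓ := by
    intro m
    induction m with
    | zero =>
      intro h
      have hbot : extendScalars h = ⊥ := by
        ext r
        rw [mem_extendScalars, IntermediateField.mem_bot]
        constructor
        · intro hr; exact ⟨⟨r, hr⟩, rfl⟩
        · rintro ⟨⟨s, hs⟩, rfl⟩; exact hs
      have hrank : Module.finrank (K ℓ) (extendScalars h) = 1 := by
        rw [hbot, IntermediateField.finrank_bot]
      constructor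
      · exact hbot ▸ inferInstance
      · intro j
        have hz : (⟨(u j : ℝ) - x (ℓ + 0),
            by rw [mem_extendScalars]
               exact sub_mem (IntermediateField.intCast_mem _ _) (hxmem _)⟩ :
            extendScalars h)
            = algebraMap (K ℓ) (extendScalars h)
              ⟨(u j : ℝ) - x ℓ, sub_mem (IntermediateField.intCast_mem _ _) (hxmem ℓ)⟩ :=
          Subtype.ext rfl
        rw [hz, Algebra.norm_algebraMap, hrank, pow_one]
        simp
    | succ m ih =>
      intro h
      have h₂ : K ℓ ≤ K (ℓ + m) := mono ℓ m
      obtain ⟨fd₂, ih⟩ := ih h₂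
      have hBC : extendScalars h₂ ≤ extendScalars h := fun r hr => hle (ℓ + m) hr
      letI : Algebra (extendScalars h₂) (extendScalars h) :=
        (IntermediateField.inclusion hBC).toRingHom.toAlgebra
      haveI hTower : IsScalarTower (K ℓ) (extendScalars h₂) (extendScalars h) :=
        IsScalarTower.of_algebraMap_eq (fun a => Subtype.ext rfl)
      have hrank2 : Module.finrank (extendScalars h₂) (extendScalars h) = 2 := hdeg (ℓ + m)
      haveI fdBC : FiniteDimensional (extendScalars h₂) (extendScalars h) :=
        FiniteDimensional.of_finrank_eq_succ hrank2
      haveI fdAC : FiniteDimensional (K ℓ) (extendScalars h) :=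
        FiniteDimensional.trans (K ℓ) (extendScalars h₂) (extendScalars h)
      refine ⟨fdAC, fun j => ?_⟩
      -- the element
      set tC : extendScalars h := ⟨x (ℓ + (m + 1)), by
        rw [mem_extendScalars]; exact hxmem _⟩ with htC
      have htnr : tC ∉ Set.range (algebraMap (extendScalars h₂) (extendScalars h)) := by
        rintro ⟨w, hw⟩
        have hxin : x (ℓ + m + 1) ∈ K (ℓ + m) := by
          have h1 : ((algebraMap (extendScalars h₂) (extendScalars h) w :
              extendScalars h) : ℝ) = x (ℓ + m + 1) := congrArg Subtype.val hw
          rw [← h1]; exact w.2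
        have hKeq : K (ℓ + m + 1) = K (ℓ + m) := by
          refine le_antisymm ?_ (hle _)
          rw [hK (ℓ + m + 1)]
          exact IntermediateField.adjoin_le_iff.mpr (Set.singleton_subset_iff.mpr hxin)
        have hbot : extendScalars (hle (ℓ + m)) = ⊥ := by
          ext r
          rw [mem_extendScalars, IntermediateField.mem_bot, hKeq]
          constructor
          · intro hr; exact ⟨⟨r, hr⟩, rfl⟩
          · rintro ⟨⟨s, hs⟩, rfl⟩; exact hs
        have : Module.finrank (K (ℓ + m)) (extendScalars (hle (ℓ + m))) = 1 := by
          rw [hbot, IntermediateField.finrank_bot]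
        rw [hdeg (ℓ + m)] at this
        omega
      set cB : extendScalars h₂ := ⟨(ν : ℝ) + x (ℓ + m), by
        rw [mem_extendScalars]
        exact add_mem (IntermediateField.intCast_mem _ _) (hxmem _)⟩ with hcB
      set aB : extendScalars h₂ := ⟨(u j : ℝ), by
        rw [mem_extendScalars]
        exact IntermediateField.intCast_mem _ _⟩ with haB
      have htc : tC ^ 2 = algebraMap (extendScalars h₂) (extendScalars h) cB := by
        apply Subtype.ext
        push_cast
        exact hx (ℓ + m)
      have hz : (⟨(u j : ℝ) - x (ℓ + (m + 1)),
          by rw [mem_extendScalars]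
             exact sub_mem (IntermediateField.intCast_mem _ _) (hxmem _)⟩ :
          extendScalars h)
          = algebraMap (extendScalars h₂) (extendScalars h) aB - tC := Subtype.ext rfl
      have hnormB := quad_norm hrank2 tC htnr cB htc aB
      have hBval : aB ^ 2 - cB
          = (⟨(u (j + 1) : ℝ) - x (ℓ + m),
              by rw [mem_extendScalars]
                 exact sub_mem (IntermediateField.intCast_mem _ _) (hxmem _)⟩ :
            extendScalars h₂) := by
        apply Subtype.ext
        push_cast [hu j]
        ring
      rw [hz, ← Algebra.norm_norm (R := K ℓ) (S := extendScalars h₂), hnormB, hBval, ih (j + 1)]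
      have hidx : j + 1 + (ℓ + m) - ℓ = j + (ℓ + (m + 1)) - ℓ := by omega
      rw [hidx]
  exact (key m h).2 j
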